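/- Over the two-letter alphabet {a, b}, let L = { a·(b·a)^i : 0 ≤ i ≤ 4 } = {a, aba, ababa, abababa, ababababa}. There exists a nondeterministic finite automaton B with exactly 2 states (states q₀, q₁, start {q₀}, accept {q₁}, transitions q₀ —a→ q₁ and q₁ —b→ q₀ and no others) whose SSB(5)-language is exactly L; whereas every nondeterministic finite automaton A with a finite state type whose accepted language L(A) equals L has at least 10 states. -/

import Mathlib

/-- `RunFrom M q w ps` means: starting in state `q`, the list of states `ps` is a run of
`M` on the word `w` ending in an accepting state. -/
def RunFrom {α σ : Type*} (M : NFA α σ) : σ → List α → List σ → Prop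
  | q, [], [] => q ∈ M.accept
  | q, a :: w, p :: ps => p ∈ M.step q a ∧ RunFrom M p w ps
  | _, _ :: _, [] => False
  | _, [], _ :: _ => False

/-- `ps` is an accepting run of `M` on the word `w`. -/
def IsAcceptingRun {α σ : Type*} (M : NFA α σ) (w : List α) (ps : List σ) : Prop :=
  ∃ p rest, ps = p :: rest ∧ p ∈ M.start ∧ RunFrom M p w rest

open scoped Classical in
/-- The SSB(c)-language of `M`: words having an accepting run in which each state
occurs at most `c` times. -/
noncomputable def SSBLang {α σ : Type*} (M : NFA α σ) (c : ℕ) : Language α :=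
  {w | ∃ ps, IsAcceptingRun M w ps ∧ ∀ q : σ, ps.count q ≤ c}

/-- The letter `a` of the two-letter alphabet `{a, b}`, modeled as `Bool`. -/
def la : Bool := true

/-- The letter `b` of the two-letter alphabet `{a, b}`, modeled as `Bool`. -/
def lb : Bool := false

/-- The alternating word `a·(b·a)^i` of length `2 i + 1`. -/
def altWord (i : ℕ) : List Bool := la :: (List.replicate i [lb, la]).flatten

/-- The language `L = { a·(b·a)^i : 0 ≤ i ≤ 4 }`. -/
def altLang : Language Bool := {w | ∃ i ≤ 4, w = altWord i}

/-- The two-state NFA with states `q₀ = 0`, `q₁ = 1`, start `{q₀}`, accept `{q₁}`, and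
transitions `q₀ —a→ q₁` and `q₁ —b→ q₀` only. -/
def twoStateNFA : NFA Bool (Fin 2) where
  step := fun q x => {p | (q = 0 ∧ x = la ∧ p = 1) ∨ (q = 1 ∧ x = lb ∧ p = 0)}
  start := {0}
  accept := {1}

/-! ### Auxiliary machinery: traces of an NFA -/

/-- `Tr M q w ps r`: reading `w` from `q` through intermediate states `ps` ends at `r`. -/
def Tr {α σ : Type*} (M : NFA α σ) : σ → List α → List σ → σ → Prop
  | q, [], [], r => q = r
  | q, a :: w, p :: ps, r => p ∈ M.step q a ∧ Tr M p w ps r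
  | _, _ :: _, [], _ => False
  | _, [], _ :: _, _ => False

theorem Tr_length {α σ : Type*} {M : NFA α σ} :
    ∀ {q : σ} {w : List α} {ps : List σ} {r : σ}, Tr M q w ps r → ps.length = w.length
  | _, [], [], _, _ => rfl
  | _, _ :: _, _ :: _, _, h => by simpa using Tr_length h.2
  | _, _ :: _, [], _, h => h.elim
  | _, [], _ :: _, _, h => h.elim

theorem Tr_append {α σ : Type*} {M : NFA α σ} :
    ∀ {q : σ} {w1 : List α} {ps1 : List σ} {s : σ} {w2 : List α} {ps2 : List σ} {r : σ},
      Tr M q w1 ps1 s → Tr M s w2 ps2 r → Tr M q (w1 ++ w2) (ps1 ++ ps2) r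
  | _, [], [], _, _, _, _, h1, h2 => by cases h1; exact h2
  | _, _ :: _, _ :: _, _, _, _, _, h1, h2 => ⟨h1.1, Tr_append h1.2 h2⟩
  | _, _ :: _, [], _, _, _, _, h1, _ => h1.elim
  | _, [], _ :: _, _, _, _, _, h1, _ => h1.elim

theorem Tr_split {α σ : Type*} {M : NFA α σ} :
    ∀ (ps1 : List σ) {q : σ} {w : List α} {ps2 : List σ} {r : σ},
      Tr M q w (ps1 ++ ps2) r →
      ∃ w1 w2 s, w = w1 ++ w2 ∧ w1.length = ps1.length ∧ Tr M q w1 ps1 s ∧ Tr M s w2 ps2 r := by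
  intro ps1
  induction ps1 with
  | nil => intro q w ps2 r h; exact ⟨[], w, q, rfl, rfl, rfl, h⟩
  | cons p ps1 ih =>
    intro q w ps2 r h
    match w with
    | [] => exact h.elim
    | a :: w =>
      obtain ⟨h1, h2⟩ := h
      obtain ⟨w1, w2, s, rfl, hl, hw1, hw2⟩ := ih h2
      exact ⟨a :: w1, w2, s, rfl, by simp [hl], ⟨h1, hw1⟩, hw2⟩

theorem Tr_last {α σ : Type*} {M : NFA α σ} {q : σ} {w : List α} {ps : List σ} {x r : σ}
    (h : Tr M q w (ps ++ [x]) r) : r = x := by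
  obtain ⟨w1, w2, s, rfl, hl, hw1, hw2⟩ := Tr_split ps h
  match w2, hw2 with
  | [a], hw2 =>
    obtain ⟨_, h2⟩ := hw2
    cases h2
    rfl
  | [], hw2 => exact hw2.elim
  | _ :: _ :: _, hw2 => exact hw2.2.elim

theorem mem_evalFrom_iff_tr {α σ : Type*} (M : NFA α σ) :
    ∀ (w : List α) (S : Set σ) (r : σ),
      r ∈ M.evalFrom S w ↔ ∃ q ∈ S, ∃ ps, Tr M q w ps r := by
  intro w
  induction w with
  | nil =>
    intro S r
    simp only [NFA.evalFrom_nil]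
    constructor
    · intro h; exact ⟨r, h, [], rfl⟩
    · rintro ⟨q, hq, ps, h⟩
      match ps, h with
      | [], h => cases h; exact hq
  | cons a w ih =>
    intro S r
    have : M.evalFrom S (a :: w) = M.evalFrom (M.stepSet S a) w := rfl
    rw [this, ih]
    constructor
    · rintro ⟨p, hp, ps, h⟩
      rw [NFA.mem_stepSet] at hp
      obtain ⟨q, hq, hstep⟩ := hp
      exact ⟨q, hq, p :: ps, hstep, h⟩
    · rintro ⟨q, hq, ps, h⟩
      match ps, h with
      | p :: ps, h =>
        exact ⟨p, NFA.mem_stepSet.2 ⟨q, hq, h.1⟩, ps, h.2⟩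

theorem mem_accepts_iff_tr {α σ : Type*} (M : NFA α σ) (w : List α) :
    w ∈ M.accepts ↔ ∃ q ∈ M.start, ∃ ps r, Tr M q w ps r ∧ r ∈ M.accept := by
  rw [NFA.mem_accepts]
  constructor
  · rintro ⟨r, hr, hmem⟩
    obtain ⟨q, hq, ps, h⟩ := (mem_evalFrom_iff_tr M w M.start r).1 hmem
    exact ⟨q, hq, ps, r, h, hr⟩
  · rintro ⟨q, hq, ps, r, h, hr⟩
    exact ⟨r, hr, (mem_evalFrom_iff_tr M w M.start r).2 ⟨q, hq, ps, h⟩⟩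

theorem dup_decomp {α : Type*} {x : α} {l : List α} (h : List.Duplicate x l) :
    ∃ l1 l2 l3, l = l1 ++ x :: l2 ++ x :: l3 := by
  induction h with
  | cons_mem hm =>
    obtain ⟨s, t, rfl⟩ := List.append_of_mem hm
    exact ⟨[], s, t, rfl⟩
  | @cons_duplicate y l _ ih =>
    obtain ⟨l1, l2, l3, rfl⟩ := ih
    exact ⟨y :: l1, l2, l3, rfl⟩

/-- Pumping a duplicated state once yields a strictly longer accepted word. -/
theorem tr_pump {α σ : Type*} {M : NFA α σ} {q : σ} {w : List α} {ps : List σ} {r : σ}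
    (h : Tr M q w ps r) (hnd : ¬ (q :: ps).Nodup) :
    ∃ w' ps', w.length < w'.length ∧ Tr M q w' ps' r := by
  obtain ⟨x, hx⟩ := List.exists_duplicate_iff_not_nodup.2 hnd
  obtain ⟨l1, l2, l3, hdec⟩ := dup_decomp hx
  cases l1 with
  | nil =>
    obtain ⟨hq, rfl⟩ : q = x ∧ ps = (l2 ++ [x]) ++ l3 := by
      simpa using hdec
    obtain ⟨w1, w2, s, rfl, hl, hw1, hw2⟩ := Tr_split (l2 ++ [x]) h
    have hs : s = q := (Tr_last hw1).trans hq.symm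
    rw [hs] at hw1 hw2
    refine ⟨w1 ++ w1 ++ w2, (l2 ++ [x]) ++ ((l2 ++ [x]) ++ l3), ?_, ?_⟩
    · have : 0 < w1.length := by rw [hl]; simp
      simp; omega
    · rw [List.append_assoc]
      exact Tr_append hw1 (Tr_append hw1 hw2)
  | cons y l1 =>
    obtain ⟨hq, rfl⟩ : q = y ∧ ps = (l1 ++ [x]) ++ ((l2 ++ [x]) ++ l3) := by
      constructor
      · exact (List.cons_eq_cons.1 hdec).1
      · have := (List.cons_eq_cons.1 hdec).2
        simp [this]
    obtain ⟨u, w', s1, rfl, hlu, hu, hrest⟩ := Tr_split (l1 ++ [x]) h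
    have hs1 := Tr_last hu
    rw [hs1] at hu hrest
    obtain ⟨v, z, s2, rfl, hlv, hv, hz⟩ := Tr_split (l2 ++ [x]) hrest
    have hs2 := Tr_last hv
    rw [hs2] at hv hz
    refine ⟨u ++ (v ++ (v ++ z)), (l1 ++ [x]) ++ ((l2 ++ [x]) ++ ((l2 ++ [x]) ++ l3)), ?_, ?_⟩
    · have : 0 < v.length := by rw [hlv]; simp
      simp; omega
    · exact Tr_append hu (Tr_append hv (Tr_append hv hz))

/-! ### Auxiliary facts about the two-state NFA and the alternating words -/

theorem flat_length {β : Type*} (x y : β) (i : ℕ) :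
    (List.replicate i [x, y]).flatten.length = 2 * i := by
  induction i with
  | zero => rfl
  | succ n ih =>
    simp only [List.replicate_succ, List.flatten_cons, List.length_cons, List.length_append,
      List.length_nil, ih]
    omega

theorem altWord_length (i : ℕ) : (altWord i).length = 2 * i + 1 := by
  simp [altWord, flat_length]
  omega

theorem runFrom_one : ∀ (w : List Bool) (rest : List (Fin 2)), RunFrom twoStateNFA 1 w rest →
    ∃ i, w = (List.replicate i [lb, la]).flatten ∧
      rest = (List.replicate i [(0 : Fin 2), 1]).flatten
  | [], [], _ => ⟨0, rfl, rfl⟩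
  | [], _ :: _, h => h.elim
  | _ :: _, [], h => h.elim
  | [a], [p], h => by
    obtain ⟨h1, h2⟩ := h
    rcases h1 with ⟨h, -⟩ | ⟨-, -, rfl⟩
    · exact absurd h (by decide)
    · exact absurd h2 (by simp [twoStateNFA, RunFrom])
  | [a], p :: q :: rest, h => h.2.elim
  | a :: b :: w, [p], h => h.2.elim
  | a :: b :: w, p :: p2 :: rest, h => by
    obtain ⟨h1, h2, h3⟩ := h
    rcases h1 with ⟨h, -⟩ | ⟨-, rfl, rfl⟩
    · exact absurd h (by decide)
    rcases h2 with ⟨-, rfl, rfl⟩ | ⟨h, -⟩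
    swap
    · exact absurd h (by decide)
    obtain ⟨i, rfl, rfl⟩ := runFrom_one w rest h3
    exact ⟨i + 1, by simp [List.replicate_succ], by simp [List.replicate_succ]⟩

theorem runFrom_zero (w : List Bool) (rest : List (Fin 2))
    (h : RunFrom twoStateNFA 0 w rest) :
    ∃ i, w = altWord i ∧ rest = (1 : Fin 2) :: (List.replicate i [(0 : Fin 2), 1]).flatten := by
  match w, rest, h with
  | [], [], h => exact absurd h (by simp [twoStateNFA, RunFrom])
  | [], _ :: _, h => exact h.elim
  | _ :: _, [], h => exact h.elim
  | a :: w, p :: rest, ⟨h1, h2⟩ =>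
    rcases h1 with ⟨-, rfl, rfl⟩ | ⟨h, -⟩
    · obtain ⟨i, rfl, rfl⟩ := runFrom_one w rest h2
      exact ⟨i, rfl, rfl⟩
    · exact absurd h (by decide)

theorem runAlt : ∀ i : ℕ, RunFrom twoStateNFA 0 (altWord i)
    ((1 : Fin 2) :: (List.replicate i [(0 : Fin 2), 1]).flatten)
  | 0 => ⟨Or.inl ⟨rfl, rfl, rfl⟩, rfl⟩
  | (i + 1) => by
    have ih := runAlt i
    simp only [altWord, List.replicate_succ, List.flatten_cons] at ih ⊢
    exact ⟨Or.inl ⟨rfl, rfl, rfl⟩, Or.inr ⟨rfl, rfl, rfl⟩, ih⟩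

theorem flat_count (inst : DecidableEq (Fin 2)) (i : ℕ) (q : Fin 2) :
    @List.count _ (@instBEqOfDecidableEq _ inst) q ((List.replicate i [(0 : Fin 2), 1]).flatten)
      = i := by
  have h : inst = instDecidableEqFin 2 := Subsingleton.elim _ _
  subst h
  induction i with
  | zero => simp
  | succ n ih =>
    fin_cases q <;>
      simp_all [List.replicate_succ, List.count_cons, Fin.ext_iff]

theorem full_count (inst : DecidableEq (Fin 2)) (i : ℕ) (q : Fin 2) :
    @List.count _ (@instBEqOfDecidableEq _ inst) q
      ((0 : Fin 2) :: (1 : Fin 2) :: (List.replicate i [(0 : Fin 2), 1]).flatten) = i + 1 := by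
  have h : inst = instDecidableEqFin 2 := Subsingleton.elim _ _
  subst h
  have h0 := flat_count (instDecidableEqFin 2) i q
  fin_cases q <;> simp_all [List.count_cons, Fin.ext_iff]

/-- The SSB(5)-language of the explicit two-state NFA is exactly
`L = {a, aba, ababa, abababa, ababababa}`, whereas every NFA whose accepted language
equals `L` has at least 10 states. -/
theorem ssb_nfa_savings :
    SSBLang twoStateNFA 5 = altLang ∧
    ∀ (σ : Type) [Fintype σ] (A : NFA Bool σ),
      A.accepts = altLang → 10 ≤ Fintype.card σ := by
  constructor
  · ext w
    constructor
    · rintro ⟨ps, ⟨p, rest, rfl, hstart, hrun⟩, hcnt⟩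
      have hp : p = 0 := hstart
      subst hp
      obtain ⟨i, rfl, rfl⟩ := runFrom_zero w rest hrun
      have h0 := hcnt 0
      rw [full_count] at h0
      exact ⟨i, by omega, rfl⟩
    · rintro ⟨i, hi, rfl⟩
      refine ⟨(0 : Fin 2) :: (1 : Fin 2) :: (List.replicate i [(0 : Fin 2), 1]).flatten,
        ⟨0, _, rfl, rfl, runAlt i⟩, ?_⟩
      intro q
      rw [full_count]
      omega
  · intro σ _ A hA
    by_contra hlt
    push_neg at hlt
    have hw : altWord 4 ∈ A.accepts := by
      rw [hA]; exact ⟨4, le_refl 4, rfl⟩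
    rw [mem_accepts_iff_tr] at hw
    obtain ⟨q, hq, ps, r, htr, hr⟩ := hw
    have hlen : ps.length = 9 := by rw [Tr_length htr, altWord_length]
    have hnd : ¬ (q :: ps).Nodup := by
      intro hn
      have := hn.length_le_card
      rw [List.length_cons, hlen] at this
      omega
    obtain ⟨w', ps', hgt, htr'⟩ := tr_pump htr hnd
    have hacc : w' ∈ A.accepts := (mem_accepts_iff_tr A w').2 ⟨q, hq, ps', r, htr', hr⟩
    rw [hA] at hacc
    obtain ⟨i, hi, rfl⟩ := hacc
    rw [altWord_length, altWord_length] at hgt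
    omega
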